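/- Let (a_n)_{n∈ℕ} be a sequence of non-negative real numbers and let 0 < β < γ be real numbers such that ∫_1^∞ sup{a_n : n ∈ ℕ, β·t < n < γ·t} dt < ∞ (with the convention that the supremum over the empty set is 0). Then the series Σ_{n≥1} a_n converges. -/

import Mathlib

open MeasureTheory

/-- If the tail integral `∫_1^∞ sup{a_n : β·t < n < γ·t} dt` is finite
for some `0 < β < γ`, then the series `Σ a_n` converges. The supremum over the empty
set is `0` (the real `iSup` convention, consistent with `a_n ≥ 0`). -/
theorem summable_of_integral_sup_window_finite
    (a : ℕ → ℝ) (ha : ∀ n, 0 ≤ a n) (β γ : ℝ) (hβ : 0 < β) (hβγ : β < γ)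
    (hint : ∫⁻ t in Set.Ici (1 : ℝ),
        ENNReal.ofReal (⨆ n ∈ {n : ℕ | β * t < (n : ℝ) ∧ (n : ℝ) < γ * t}, a n) < ⊤) :
    Summable fun n : ℕ => a n := by
  have hγ : 0 < γ := hβ.trans hβγ
  set g : ℝ → ENNReal := fun t =>
    ENNReal.ofReal (⨆ n ∈ {n : ℕ | β * t < (n : ℝ) ∧ (n : ℝ) < γ * t}, a n) with hg
  set c : ℝ := β⁻¹ - γ⁻¹ with hcdef
  have hc : 0 < c := sub_pos.mpr (inv_strictAnti₀ hβ hβγ)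
  set N : ℕ := ⌊γ⌋₊ + 1 with hN
  have hNγ : γ < (N : ℝ) := by
    have := Nat.lt_floor_add_one γ
    push_cast [hN]; linarith
  set I : ℕ → Set ℝ := fun m => Set.Ioo ((m : ℝ) / γ) ((m : ℝ) / β) with hI
  -- membership characterization
  have hmemI : ∀ (t : ℝ) (m : ℕ), t ∈ I m ↔ β * t < (m : ℝ) ∧ (m : ℝ) < γ * t := by
    intro t m
    simp only [hI, Set.mem_Ioo]
    constructor
    · rintro ⟨h1, h2⟩
      constructor
      · rw [lt_div_iff₀ hβ] at h2; linarith
      · rw [div_lt_iff₀ hγ] at h1; linarith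
    · rintro ⟨h1, h2⟩
      constructor
      · rw [div_lt_iff₀ hγ]; linarith
      · rw [lt_div_iff₀ hβ]; linarith
  -- a m is ≤ the sup whenever m is in the window
  have hsup : ∀ (t : ℝ) (m : ℕ), β * t < (m : ℝ) → (m : ℝ) < γ * t →
      a m ≤ ⨆ n ∈ {n : ℕ | β * t < (n : ℝ) ∧ (n : ℝ) < γ * t}, a n := by
    intro t m h1 h2
    set S := {n : ℕ | β * t < (n : ℝ) ∧ (n : ℝ) < γ * t} with hS
    set B : ℝ := ∑ n ∈ Finset.range (⌊γ * t⌋₊ + 1), a n with hB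
    have hbdd : ∀ n : ℕ, (⨆ _ : n ∈ S, a n) ≤ B := by
      intro n
      by_cases h : n ∈ S
      · rw [ciSup_pos h]
        refine Finset.single_le_sum (fun i _ => ha i) ?_
        rw [Finset.mem_range, Nat.lt_succ_iff]
        exact Nat.le_floor h.2.le
      · have : IsEmpty (n ∈ S) := ⟨h⟩
        rw [Real.iSup_of_isEmpty]
        exact Finset.sum_nonneg fun i _ => ha i
    have hbdd' : BddAbove (Set.range fun n : ℕ => ⨆ _ : n ∈ S, a n) := by
      refine ⟨B, ?_⟩
      rintro x ⟨n, rfl⟩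
      exact hbdd n
    have hm : m ∈ S := ⟨h1, h2⟩
    calc a m = ⨆ _ : m ∈ S, a m := (ciSup_pos (f := fun _ => a m) hm).symm
      _ ≤ ⨆ n, ⨆ _ : n ∈ S, a n := le_ciSup hbdd' m
  -- F : measurable minorant of g
  set F : ℝ → ENNReal := fun t =>
    ⨆ m : ℕ, Set.indicator (I m) (fun _ => ENNReal.ofReal (a m)) t with hF
  have hFmeas : Measurable F := by
    refine Measurable.iSup fun m => Measurable.indicator measurable_const ?_
    exact measurableSet_Ioo
  have hFle : ∀ t, F t ≤ g t := by
    intro t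
    refine iSup_le fun m => ?_
    by_cases h : t ∈ I m
    · rw [Set.indicator_of_mem h]
      rcases (hmemI t m).mp h with ⟨h1, h2⟩
      exact ENNReal.ofReal_le_ofReal (hsup t m h1 h2)
    · rw [Set.indicator_of_notMem h]; exact zero_le
  have hFge : ∀ (t : ℝ) (m : ℕ), t ∈ I m → ENNReal.ofReal (a m) ≤ F t := by
    intro t m h
    calc ENNReal.ofReal (a m) = Set.indicator (I m) (fun _ => ENNReal.ofReal (a m)) t := by
          rw [Set.indicator_of_mem h]
      _ ≤ F t := le_iSup (fun k => (I k).indicator (fun _ => ENNReal.ofReal (a k)) t) m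
  -- H : F weighted by 1/t
  set H : ℝ → ENNReal := fun t => F t * (ENNReal.ofReal t)⁻¹ with hH
  have hHmeas : Measurable H := hFmeas.mul (ENNReal.measurable_ofReal.comp measurable_id).inv
  -- step 1 : per-m lower bound
  have step1 : ∀ m : ℕ, ENNReal.ofReal (a (m + N)) * ENNReal.ofReal (β * c) ≤
      ∫⁻ t, Set.indicator (I (m + N)) H t := by
    intro m
    set M : ℕ := m + N with hM
    have hM0 : 0 < (M : ℝ) := by
      have : 0 < N := Nat.succ_pos _
      push_cast [hM]; positivity
    set c₀ : ENNReal := ENNReal.ofReal (a M) * (ENNReal.ofReal ((M : ℝ) / β))⁻¹ with hc₀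
    have hpt : ∀ t : ℝ, Set.indicator (I M) (fun _ => c₀) t ≤ Set.indicator (I M) H t := by
      intro t
      by_cases h : t ∈ I M
      · rw [Set.indicator_of_mem h, Set.indicator_of_mem h]
        refine mul_le_mul' (hFge t M h) ?_
        rw [ENNReal.inv_le_inv]
        exact ENNReal.ofReal_le_ofReal h.2.le
      · rw [Set.indicator_of_notMem h, Set.indicator_of_notMem h]
    calc ENNReal.ofReal (a M) * ENNReal.ofReal (β * c)
        = c₀ * volume (I M) := by
          rw [hc₀, hI]
          rw [Real.volume_Ioo]
          have hMβ : (0:ℝ) < (M : ℝ) / β := by positivity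
          have hβ0 : β ≠ 0 := hβ.ne'
          have hγ0 : γ ≠ 0 := hγ.ne'
          have hM0' : (M : ℝ) ≠ 0 := hM0.ne'
          rw [mul_assoc]
          congr 1
          rw [mul_comm, ← ENNReal.div_eq_inv_mul, ← ENNReal.ofReal_div_of_pos hMβ]
          congr 1
          rw [hcdef]
          field_simp
      _ = ∫⁻ t, Set.indicator (I M) (fun _ => c₀) t := by
          rw [lintegral_indicator_const measurableSet_Ioo]
      _ ≤ ∫⁻ t, Set.indicator (I M) H t := lintegral_mono hpt
  -- step 3 : pointwise multiplicity bound
  have step3 : ∀ t : ℝ, (∑' m : ℕ, Set.indicator (I (m + N)) H t) ≤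
      ENNReal.ofReal (γ + 1) * Set.indicator (Set.Ici (1:ℝ)) g t := by
    intro t
    by_cases hex : ∃ m : ℕ, t ∈ I (m + N)
    · obtain ⟨m₀, hm₀⟩ := hex
      have ht1 : (1:ℝ) < t := by
        have h1 : ((m₀ + N : ℕ) : ℝ) / γ < t := hm₀.1
        have h2 : γ < ((m₀ + N : ℕ) : ℝ) := by
          refine lt_of_lt_of_le hNγ ?_
          exact_mod_cast Nat.le_add_left N m₀
        calc (1:ℝ) < ((m₀ + N : ℕ) : ℝ) / γ := by
              rw [lt_div_iff₀ hγ]; linarith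
          _ < t := h1
      have ht0 : (0:ℝ) < t := by linarith
      have hγt : (0:ℝ) ≤ γ * t := by positivity
      set K : ℕ := ⌊γ * t⌋₊ + 1 with hK
      have hsupp : ∀ m : ℕ, m ∉ Finset.range K → Set.indicator (I (m + N)) H t = 0 := by
        intro m hm
        rw [Finset.mem_range, hK, Nat.lt_succ_iff] at hm
        rw [Set.indicator_of_notMem]
        intro hmem
        rcases (hmemI t (m + N)).mp hmem with ⟨_, h2⟩
        have : (m : ℝ) < γ * t := by
          push_cast at h2 ⊢
          have : (0:ℝ) ≤ (N:ℝ) := Nat.cast_nonneg _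
          linarith
        exact hm (Nat.le_floor this.le)
      calc (∑' m : ℕ, Set.indicator (I (m + N)) H t)
          = ∑ m ∈ Finset.range K, Set.indicator (I (m + N)) H t := tsum_eq_sum hsupp
        _ ≤ ∑ _m ∈ Finset.range K, H t := by
            refine Finset.sum_le_sum fun i _ => ?_
            exact Set.indicator_le_self _ _ t
        _ = (K : ENNReal) * H t := by
            rw [Finset.sum_const, Finset.card_range, nsmul_eq_mul]
        _ ≤ ENNReal.ofReal ((γ + 1) * t) * H t := by
            refine mul_le_mul' ?_ le_rfl
            rw [← ENNReal.ofReal_natCast]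
            refine ENNReal.ofReal_le_ofReal ?_
            push_cast [hK]
            have h1 : (⌊γ * t⌋₊ : ℝ) ≤ γ * t := Nat.floor_le hγt
            nlinarith
        _ = ENNReal.ofReal (γ + 1) * (ENNReal.ofReal t * (ENNReal.ofReal t)⁻¹) * F t := by
            rw [ENNReal.ofReal_mul (by linarith : (0:ℝ) ≤ γ + 1)]
            rw [hH]
            ring
        _ = ENNReal.ofReal (γ + 1) * F t := by
            rw [ENNReal.mul_inv_cancel (by simp [ht0] : ENNReal.ofReal t ≠ 0)
              ENNReal.ofReal_ne_top, mul_one]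
        _ ≤ ENNReal.ofReal (γ + 1) * Set.indicator (Set.Ici (1:ℝ)) g t := by
            refine mul_le_mul' le_rfl ?_
            rw [Set.indicator_of_mem (Set.mem_Ici.mpr ht1.le)]
            exact hFle t
    · push_neg at hex
      have : ∀ m : ℕ, Set.indicator (I (m + N)) H t = 0 := fun m =>
        Set.indicator_of_notMem (hex m) _
      simp only [this, tsum_zero]
      exact zero_le
  -- combine
  have key : (∑' m : ℕ, ENNReal.ofReal (a (m + N))) * ENNReal.ofReal (β * c) ≤
      ENNReal.ofReal (γ + 1) * ∫⁻ t in Set.Ici (1:ℝ), g t := by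
    rw [← ENNReal.tsum_mul_right]
    calc (∑' m : ℕ, ENNReal.ofReal (a (m + N)) * ENNReal.ofReal (β * c))
        ≤ ∑' m : ℕ, ∫⁻ t, Set.indicator (I (m + N)) H t := Summable.tsum_le_tsum step1 ENNReal.summable ENNReal.summable
      _ = ∫⁻ t, ∑' m : ℕ, Set.indicator (I (m + N)) H t := by
          rw [lintegral_tsum]
          intro m
          exact (hHmeas.indicator measurableSet_Ioo).aemeasurable
      _ ≤ ∫⁻ t, ENNReal.ofReal (γ + 1) * Set.indicator (Set.Ici (1:ℝ)) g t :=
          lintegral_mono step3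
      _ = ENNReal.ofReal (γ + 1) * ∫⁻ t, Set.indicator (Set.Ici (1:ℝ)) g t :=
          lintegral_const_mul' _ _ ENNReal.ofReal_ne_top
      _ = ENNReal.ofReal (γ + 1) * ∫⁻ t in Set.Ici (1:ℝ), g t := by
          rw [lintegral_indicator measurableSet_Ici]
  have hfin : (∑' m : ℕ, ENNReal.ofReal (a (m + N))) * ENNReal.ofReal (β * c) < ⊤ :=
    lt_of_le_of_lt key (ENNReal.mul_lt_top ENNReal.ofReal_lt_top hint)
  have hne : (∑' m : ℕ, ENNReal.ofReal (a (m + N))) ≠ ⊤ := by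
    intro h
    rw [h, ENNReal.top_mul] at hfin
    · exact lt_irrefl _ hfin
    · simp only [ne_eq, ENNReal.ofReal_eq_zero, not_le]
      positivity
  have hsum : Summable fun m : ℕ => a (m + N) := by
    have := ENNReal.summable_toReal hne
    refine this.congr fun m => ?_
    exact ENNReal.toReal_ofReal (ha _)
  exact (summable_nat_add_iff N).mp hsum
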